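/- Let G be a graph in which C_4, the complement of C_4, C_5, the chair, and the co-chair are all forbidden as induced subgraphs. If mbb'm' is an induced path P_4 in G, then N(m) \ {b} = N(m') \ {b'}. -/

import Mathlib

open SimpleGraph

universe u

/-- `H` is forbidden as an induced subgraph of `G`: no induced subgraph of `G`
is isomorphic to `H`. -/
def ForbiddenIn {W : Type*} {V : Type*} (H : SimpleGraph W) (G : SimpleGraph V) : Prop :=
  ¬ ∃ f : W ↪ V, ∀ u v, G.Adj (f u) (f v) ↔ H.Adj u v

/-- The chair: vertices `0,1,2,3,4` with exactly the edges `01, 12, 23, 24`. -/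
def chair : SimpleGraph (Fin 5) :=
  SimpleGraph.fromRel (fun a b =>
    (a = 0 ∧ b = 1) ∨ (a = 1 ∧ b = 2) ∨ (a = 2 ∧ b = 3) ∨ (a = 2 ∧ b = 4))

/-- `C₄`, `C₄`'s complement, `C₅`, the chair and the co-chair are all forbidden in `G`. -/
def FiveForbidden {V : Type*} (G : SimpleGraph V) : Prop :=
  ForbiddenIn (cycleGraph 4) G ∧ ForbiddenIn (cycleGraph 4)ᶜ G ∧
  ForbiddenIn (cycleGraph 5) G ∧ ForbiddenIn chair G ∧ ForbiddenIn chairᶜ G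

/-- `G` is an `{S, K}`-split graph: `V(G)` is the disjoint union of the stable set `S`
and the clique `K`. -/
def IsSplitPartition {V : Type*} (G : SimpleGraph V) (S K : Set V) : Prop :=
  (∀ v, v ∈ S ∨ v ∈ K) ∧ Disjoint S K ∧
  (∀ a ∈ S, ∀ b ∈ S, ¬ G.Adj a b) ∧
  (∀ a ∈ K, ∀ b ∈ K, a ≠ b → G.Adj a b)

/-- `a b b' a'` is an induced path `P₄` in `G`: the four vertices are distinct and the
only edges among them are `ab`, `bb'`, `b'a'`. -/
def IsInducedP4 {V : Type*} (G : SimpleGraph V) (a b b' a' : V) : Prop :=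
  a ≠ b ∧ a ≠ b' ∧ a ≠ a' ∧ b ≠ b' ∧ b ≠ a' ∧ b' ≠ a' ∧
  G.Adj a b ∧ G.Adj b b' ∧ G.Adj b' a' ∧
  ¬ G.Adj a b' ∧ ¬ G.Adj a a' ∧ ¬ G.Adj b a'

/-- `G` is an `{S, K}`-threshold graph, following the paper's Definition 2.
Here `X i` stands for `X_{i+1}` (real indices `1,…,n+1`) and `A i` stands for `A_i`
(real indices `0,…,n`), so the condition `1 ≤ j ≤ i ≤ n` on real indices becomes
`(j : ℕ) < (i : ℕ)` on the `Fin (n+1)` indices. -/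
def IsSKThreshold {V : Type*} (G : SimpleGraph V) (S K : Set V) : Prop :=
  ∃ (n : ℕ) (X A : Fin (n + 1) → Set V),
    (∀ i j, i ≠ j → Disjoint (X i) (X j)) ∧
    (∀ i j, i ≠ j → Disjoint (A i) (A j)) ∧
    (∀ i j, Disjoint (X i) (A j)) ∧
    K = ⋃ i, X i ∧
    S = ⋃ i, A i ∧
    (∀ v, v ∈ S ∨ v ∈ K) ∧
    (∀ i : Fin (n + 1), (i : ℕ) < n → (X i).Nonempty) ∧
    (∀ i : Fin (n + 1), 0 < (i : ℕ) → (A i).Nonempty) ∧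
    (∀ u v, G.Adj u v ↔
      (u ∈ K ∧ v ∈ K ∧ u ≠ v) ∨
      (∃ i j : Fin (n + 1), (j : ℕ) < (i : ℕ) ∧
        ((u ∈ A i ∧ v ∈ X j) ∨ (v ∈ A i ∧ u ∈ X j))))

/-- The allowed cross (stable-to-clique) edges of a comb.  Indexing conventions:
`A i = A_i` (`0,…,n`), `X i = X_{i+1}` (`1,…,n+1`), `M k = M_{k+1}` (`1,…,l`),
`Y k = Y_{k+1}` (`1,…,l+2`).  `s` is the stable-side endpoint, `x` the clique-side one. -/
def CombCross {V : Type*} (n l k0 : ℕ) (A X : Fin (n + 1) → Set V)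
    (M : Fin l → Set V) (Y : Fin (l + 2) → Set V) (s x : V) : Prop :=
  (∃ i j : Fin (n + 1), (j : ℕ) < (i : ℕ) ∧ s ∈ A i ∧ x ∈ X j) ∨
  ((∃ i, s ∈ A i) ∧ (∃ j, x ∈ Y j)) ∨
  (∃ k : Fin l, s ∈ M k ∧ x ∈ Y ⟨(k : ℕ), by omega⟩) ∨
  (∃ (k1 : Fin l) (k2 : Fin (l + 2)), (k1 : ℕ) < (k2 : ℕ) ∧ (k2 : ℕ) < l ∧
    s ∈ M k1 ∧ x ∈ Y k2) ∨
  (∃ k : Fin l, (k : ℕ) + 1 ≤ k0 ∧ s ∈ M k ∧ x ∈ Y ⟨l, by omega⟩)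

/-- `G` is an `{S, K}`-comb, following the paper's Definition 3.
Indexing conventions as in `CombCross`; in particular `Y 0 = X 0` encodes `Y_1 = X_1`,
`Y ⟨l,_⟩` is `Y_{l+1}` and `Y ⟨l+1,_⟩` is `Y_{l+2}`. -/
def IsSKComb {V : Type*} (G : SimpleGraph V) (S K : Set V) : Prop :=
  ∃ (n l : ℕ) (A X : Fin (n + 1) → Set V) (M : Fin l → Set V)
    (Y : Fin (l + 2) → Set V) (k0 : ℕ),
    -- (1) the sets of the comb, `Y_1 = X_1`, pairwise disjointness of the sets
    Y 0 = X 0 ∧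
    (∀ i j, i ≠ j → Disjoint (A i) (A j)) ∧
    (∀ i j, i ≠ j → Disjoint (X i) (X j)) ∧
    (∀ i j, i ≠ j → Disjoint (M i) (M j)) ∧
    (∀ i j, i ≠ j → Disjoint (Y i) (Y j)) ∧
    (∀ i j, Disjoint (A i) (X j)) ∧
    (∀ i j, Disjoint (A i) (M j)) ∧
    (∀ i j, Disjoint (A i) (Y j)) ∧
    (∀ i j, Disjoint (M i) (X j)) ∧
    (∀ i j, Disjoint (M i) (Y j)) ∧
    (∀ (i : Fin (n + 1)) (j : Fin (l + 2)), 0 < (j : ℕ) → Disjoint (X i) (Y j)) ∧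
    -- (2) `S = A ∪ M` is stable and (3) `K = X ∪ Y` is a clique, and they partition `V(G)`
    S = (⋃ i, A i) ∪ (⋃ k, M k) ∧
    K = (⋃ i, X i) ∪ (⋃ k, Y k) ∧
    (∀ v, v ∈ S ∨ v ∈ K) ∧
    Disjoint S K ∧
    (∀ a ∈ S, ∀ b ∈ S, ¬ G.Adj a b) ∧
    (∀ a ∈ K, ∀ b ∈ K, a ≠ b → G.Adj a b) ∧
    -- (4) for `1 ≤ j ≤ i ≤ n`, `G[A_i ∪ X_j]` is a complete split graph
    (∀ i j : Fin (n + 1), (j : ℕ) < (i : ℕ) → ∀ a ∈ A i, ∀ x ∈ X j, G.Adj a x) ∧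
    -- (5) `G[A ∪ Y]` is a complete split graph
    (∀ i, ∀ a ∈ A i, ∀ j, ∀ y ∈ Y j, G.Adj a y) ∧
    -- (6) for `1 ≤ i ≤ l`, `G[Y_i ∪ M_i]` is a perfect split graph
    (∀ k : Fin l,
      (∀ y ∈ Y ⟨(k : ℕ), by omega⟩, ∃! m, m ∈ M k ∧ G.Adj y m) ∧
      (∀ m ∈ M k, ∃! y, y ∈ Y ⟨(k : ℕ), by omega⟩ ∧ G.Adj y m)) ∧
    -- (7) for `1 ≤ i < j ≤ l`, `G[Y_j ∪ M_i]` is a complete split graph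
    (∀ (k1 : Fin l) (k2 : Fin (l + 2)), (k1 : ℕ) < (k2 : ℕ) → (k2 : ℕ) < l →
      ∀ m ∈ M k1, ∀ y ∈ Y k2, G.Adj m y) ∧
    -- (8) `∃ 1 ≤ k0 ≤ l` such that for all `i ≤ k0`, `G[Y_{l+1} ∪ M_i]` is complete split
    (1 ≤ k0 ∧ k0 ≤ l ∧
      ∀ k : Fin l, (k : ℕ) + 1 ≤ k0 → ∀ m ∈ M k, ∀ y ∈ Y ⟨l, by omega⟩, G.Adj m y) ∧
    -- (9) only `X_{n+1}`, `Y_{l+2}`, `Y_{l+1}`, `M_l`, `A_0` may be empty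
    (∀ i : Fin (n + 1), (i : ℕ) < n → (X i).Nonempty) ∧
    (∀ i : Fin (n + 1), 0 < (i : ℕ) → (A i).Nonempty) ∧
    (∀ k : Fin l, (k : ℕ) + 1 < l → (M k).Nonempty) ∧
    (∀ k : Fin (l + 2), 0 < (k : ℕ) → (k : ℕ) < l → (Y k).Nonempty) ∧
    -- (10) these are the only edges of `G`
    (∀ u v, G.Adj u v → (u ∈ K ∧ v ∈ K) ∨
      CombCross n l k0 A X M Y u v ∨ CombCross n l k0 A X M Y v u)

/-- `G` is a comb. -/
def IsComb {V : Type*} (G : SimpleGraph V) : Prop :=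
  ∃ S K : Set V, IsSKComb G S K


instance : DecidableRel chair.Adj := fun a b => by
  rw [chair, fromRel_adj]; infer_instance

lemma key {V : Type*} (G : SimpleGraph V) (hforb : FiveForbidden G) (m b b' m' v : V)
    (hP : IsInducedP4 G m b b' m') (hvm : G.Adj m v) (hvb : v ≠ b) : G.Adj m' v := by
  obtain ⟨hmb, hmb', hmm', hbb', hbm', hb'm', amb, abb', ab'm', nmb', nmm', nbm'⟩ := hP
  have hvb' : v ≠ b' := fun h => nmb' (h ▸ hvm)
  have hvm' : v ≠ m' := fun h => nmm' (h ▸ hvm)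
  have hvm0 : v ≠ m := fun h => G.loopless.irrefl m (h ▸ hvm)
  by_contra nm'v
  by_cases hvbp : G.Adj v b'
  · by_cases hvb2 : G.Adj v b
    · -- chairᶜ on ![b', m, m', b, v]
      refine hforb.2.2.2.2 ⟨⟨![b', m, m', b, v], ?_⟩, ?_⟩
      · intro i j h
        fin_cases i <;> fin_cases j <;> simp_all
      · intro u w
        fin_cases u <;> fin_cases w <;>
          simp only [Function.Embedding.coeFn_mk, Matrix.cons_val_zero, Matrix.cons_val_one,
            Matrix.head_cons, Matrix.cons_val_two, Matrix.tail_cons, Matrix.cons_val_three,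
            Matrix.cons_val_four, Matrix.cons_val_fin_one, Fin.isValue] <;>
          first
            | (refine iff_of_true ?_ (by decide);
                first | assumption | exact Adj.symm (by assumption))
            | (refine iff_of_false (fun h => ?_) (by decide);
                first
                  | exact G.loopless.irrefl _ h
                  | exact absurd h (by assumption)
                  | exact absurd h.symm (by assumption))
    · -- C4 on ![m, v, b', b]
      refine hforb.1 ⟨⟨![m, v, b', b], ?_⟩, ?_⟩
      · intro i j h
        fin_cases i <;> fin_cases j <;> simp_all
      · intro u w
        fin_cases u <;> fin_cases w <;>
          simp only [Function.Embedding.coeFn_mk, Matrix.cons_val_zero, Matrix.cons_val_one,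
            Matrix.head_cons, Matrix.cons_val_two, Matrix.tail_cons, Matrix.cons_val_three,
            Matrix.cons_val_fin_one, Fin.isValue] <;>
          first
            | (refine iff_of_true ?_ (by decide);
                first | assumption | exact Adj.symm (by assumption))
            | (refine iff_of_false (fun h => ?_) (by decide);
                first
                  | exact G.loopless.irrefl _ h
                  | exact absurd h (by assumption)
                  | exact absurd h.symm (by assumption))
  · -- C4ᶜ on ![v, b', m, m']
    refine hforb.2.1 ⟨⟨![v, b', m, m'], ?_⟩, ?_⟩
    · intro i j h
      fin_cases i <;> fin_cases j <;> simp_all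
    · intro u w
      fin_cases u <;> fin_cases w <;>
        simp only [Function.Embedding.coeFn_mk, Matrix.cons_val_zero, Matrix.cons_val_one,
          Matrix.head_cons, Matrix.cons_val_two, Matrix.tail_cons, Matrix.cons_val_three,
          Matrix.cons_val_fin_one, Fin.isValue] <;>
        first
          | (refine iff_of_true ?_ (by decide);
              first | assumption | exact Adj.symm (by assumption))
          | (refine iff_of_false (fun h => ?_) (by decide);
              first
                | exact G.loopless.irrefl _ h
                | exact absurd h (by assumption)
                | exact absurd h.symm (by assumption))

theorem stmt_1 {V : Type u} [Fintype V] (G : SimpleGraph V)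
    (hforb : FiveForbidden G) (m b b' m' : V)
    (hP : IsInducedP4 G m b b' m') :
    G.neighborSet m \ {b} = G.neighborSet m' \ {b'} := by
  obtain ⟨hmb, hmb', hmm', hbb', hbm', hb'm', amb, abb', ab'm', nmb', nmm', nbm'⟩ := hP
  have hP' : IsInducedP4 G m' b' b m :=
    ⟨hb'm'.symm, hbm'.symm, hmm'.symm, hbb'.symm, hmb'.symm, hmb.symm,
     ab'm'.symm, abb'.symm, amb.symm,
     fun h => nbm' h.symm, fun h => nmm' h.symm, fun h => nmb' h.symm⟩
  have hP2 : IsInducedP4 G m b b' m' :=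
    ⟨hmb, hmb', hmm', hbb', hbm', hb'm', amb, abb', ab'm', nmb', nmm', nbm'⟩
  ext v
  simp only [Set.mem_diff, mem_neighborSet, Set.mem_singleton_iff]
  constructor
  · rintro ⟨ha, hne⟩
    exact ⟨key G hforb m b b' m' v hP2 ha hne, fun h => nmb' (h ▸ ha)⟩
  · rintro ⟨ha, hne⟩
    exact ⟨key G hforb m' b' b m v hP' ha hne, fun h => nbm' (h ▸ ha).symm⟩
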